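/- Let A_e (m_e×n), A_i (m_i×n), A₀ (m₀×n) and Ā (m̄×n) be real matrices, and let x, Δx ∈ ℝⁿ; b_e, v_e, Δv_e ∈ ℝ^{m_e}; b_i, v_i, w_i, Δv_i, Δw_i ∈ ℝ^{m_i}; b₀, λ₀, w₀, Δλ₀, Δw₀ ∈ ℝ^{m₀}; b̄, v̄, λ̄, Δλ̄ ∈ ℝ^{m̄}; and s_i, s₀ ∈ ℝ. Assume v_i j − w_i j ≠ 0 and w₀ j ≠ 0 for all indices j, and set V_i := diag(v_i), W_i := diag(w_i), W₀ := diag(w₀), Λ₀ := diag(λ₀). Suppose the seven Newton-step equations hold: (1) A_eᵀ·Δv_e + A_iᵀ·Δv_i − Āᵀ·Δλ̄ − A₀ᵀ·Δλ₀ = −(A_eᵀ·v_e + A_iᵀ·v_i − Āᵀ·λ̄ − A₀ᵀ·λ₀); (2) −A_e·Δx + Δv_e = −(b_e − A_e·x + v_e); (3) −A_i·Δx + Δv_i + Δw_i = −(b_i − A_i·x + v_i + w_i); (4) W_i·Δv_i + V_i·Δw_i = −(w_i ⊙ v_i + s_i·𝟙); (5) −Ā·Δx = −(b̄ − Ā·x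 + v̄); (6) −A₀·Δx + Δw₀ = −(b₀ − A₀·x + w₀); (7) W₀·Δλ₀ + Λ₀·Δw₀ = −(λ₀ ⊙ w₀ − s₀·𝟙). Then (Δx, Δλ̄) satisfies the hierarchical augmented system C·Δx − Āᵀ·Δλ̄ = r₁ and −Ā·Δx = r₂, where C := A_eᵀ·A_e + A_iᵀ·(I + (V_i − W_i)⁻¹·W_i)·A_i + A₀ᵀ·W₀⁻¹·Λ₀·A₀, r₁ := Āᵀ·λ̄ + A₀ᵀ·F + A_eᵀ·(b_e − A_e·x) + A_iᵀ·G, r₂ := Ā·x − b̄ − v̄, F := λ₀ + W₀⁻¹·(λ₀ ⊙ (b₀ − A₀·x) + s₀·𝟙), and G := b_i − A_i·x + w_i − (V_i − W_i)⁻¹·(s_i·𝟙 + w_i ⊙ (A_i·x − b_i − w_i)). -/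

import Mathlib

open Matrix

/-- Reduction of the full interior-point Newton KKT system (rows (1)–(7)) to the
hierarchical augmented system `C·Δx − Āᵀ·Δλ̄ = r₁`, `−Ā·Δx = r₂`. Here `*` on
vectors is the entrywise (Hadamard) product and `(1 : Fin _ → ℝ)` the all-ones
vector; `Ab`, `lamb`, `vb`, `bb` play the roles of `Ā`, `λ̄`, `v̄`, `b̄`. -/
theorem newton_kkt_to_hierarchical_augmented_system {me mi m₀ mb n : ℕ}
    (Ae : Matrix (Fin me) (Fin n) ℝ) (Ai : Matrix (Fin mi) (Fin n) ℝ)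
    (A₀ : Matrix (Fin m₀) (Fin n) ℝ) (Ab : Matrix (Fin mb) (Fin n) ℝ)
    (x Δx : Fin n → ℝ)
    (be ve Δve : Fin me → ℝ)
    (bi vi wi Δvi Δwi : Fin mi → ℝ)
    (b₀ lam₀ w₀ Δlam₀ Δw₀ : Fin m₀ → ℝ)
    (bb vb lamb Δlamb : Fin mb → ℝ)
    (si s₀ : ℝ)
    (hvw : ∀ j, vi j - wi j ≠ 0) (hw₀ : ∀ j, w₀ j ≠ 0)
    (Vi Wi : Matrix (Fin mi) (Fin mi) ℝ)
    (hVi : Vi = Matrix.diagonal vi) (hWi : Wi = Matrix.diagonal wi)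
    (W₀ Λ₀ : Matrix (Fin m₀) (Fin m₀) ℝ)
    (hW₀ : W₀ = Matrix.diagonal w₀) (hΛ₀ : Λ₀ = Matrix.diagonal lam₀)
    (h1 : Aeᵀ *ᵥ Δve + Aiᵀ *ᵥ Δvi - Abᵀ *ᵥ Δlamb - A₀ᵀ *ᵥ Δlam₀ =
      -(Aeᵀ *ᵥ ve + Aiᵀ *ᵥ vi - Abᵀ *ᵥ lamb - A₀ᵀ *ᵥ lam₀))
    (h2 : -(Ae *ᵥ Δx) + Δve = -(be - Ae *ᵥ x + ve))
    (h3 : -(Ai *ᵥ Δx) + Δvi + Δwi = -(bi - Ai *ᵥ x + vi + wi))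
    (h4 : Wi *ᵥ Δvi + Vi *ᵥ Δwi = -(wi * vi + si • (1 : Fin mi → ℝ)))
    (h5 : -(Ab *ᵥ Δx) = -(bb - Ab *ᵥ x + vb))
    (h6 : -(A₀ *ᵥ Δx) + Δw₀ = -(b₀ - A₀ *ᵥ x + w₀))
    (h7 : W₀ *ᵥ Δlam₀ + Λ₀ *ᵥ Δw₀ = -(lam₀ * w₀ - s₀ • (1 : Fin m₀ → ℝ)))
    (F : Fin m₀ → ℝ)
    (hF : F = lam₀ + W₀⁻¹ *ᵥ (lam₀ * (b₀ - A₀ *ᵥ x) + s₀ • (1 : Fin m₀ → ℝ)))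
    (G : Fin mi → ℝ)
    (hG : G = bi - Ai *ᵥ x + wi -
      (Vi - Wi)⁻¹ *ᵥ (si • (1 : Fin mi → ℝ) + wi * (Ai *ᵥ x - bi - wi)))
    (C : Matrix (Fin n) (Fin n) ℝ)
    (hC : C = Aeᵀ * Ae + Aiᵀ * (1 + (Vi - Wi)⁻¹ * Wi) * Ai + A₀ᵀ * W₀⁻¹ * Λ₀ * A₀)
    (r₁ : Fin n → ℝ)
    (hr₁ : r₁ = Abᵀ *ᵥ lamb + A₀ᵀ *ᵥ F + Aeᵀ *ᵥ (be - Ae *ᵥ x) + Aiᵀ *ᵥ G)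
    (r₂ : Fin mb → ℝ)
    (hr₂ : r₂ = Ab *ᵥ x - bb - vb) :
    C *ᵥ Δx - Abᵀ *ᵥ Δlamb = r₁ ∧ -(Ab *ᵥ Δx) = r₂ := by
  subst hVi hWi hW₀ hΛ₀ hF hG hC hr₁ hr₂
  -- inverses of the diagonal matrices
  have hinvVW : (Matrix.diagonal vi - Matrix.diagonal wi)⁻¹ =
      Matrix.diagonal (fun j => (vi j - wi j)⁻¹) := by
    rw [Matrix.diagonal_sub]
    refine Matrix.inv_eq_right_inv ?_
    rw [Matrix.diagonal_mul_diagonal]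
    have : (fun j => (vi j - wi j) * (vi j - wi j)⁻¹) = fun _ : Fin mi => (1 : ℝ) :=
      funext fun j => mul_inv_cancel₀ (hvw j)
    rw [this, Matrix.diagonal_one]
  have hinvW₀ : (Matrix.diagonal w₀)⁻¹ = Matrix.diagonal (fun j => (w₀ j)⁻¹) := by
    refine Matrix.inv_eq_right_inv ?_
    rw [Matrix.diagonal_mul_diagonal]
    have : (fun j => w₀ j * (w₀ j)⁻¹) = fun _ : Fin m₀ => (1 : ℝ) :=
      funext fun j => mul_inv_cancel₀ (hw₀ j)
    rw [this, Matrix.diagonal_one]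
  -- pointwise claim for the inequality block
  have P2 : Δvi + vi = (1 + (Matrix.diagonal vi - Matrix.diagonal wi)⁻¹ *
      Matrix.diagonal wi) *ᵥ (Ai *ᵥ Δx) -
      (bi - Ai *ᵥ x + wi - (Matrix.diagonal vi - Matrix.diagonal wi)⁻¹ *ᵥ
        (si • (1 : Fin mi → ℝ) + wi * (Ai *ᵥ x - bi - wi))) := by
    funext j
    have h3j := congrFun h3 j
    have h4j := congrFun h4 j
    simp only [Pi.add_apply, Pi.neg_apply, Pi.sub_apply, Pi.mul_apply, Pi.smul_apply,
      Pi.one_apply, smul_eq_mul, mul_one, Matrix.mulVec_diagonal, Matrix.add_mulVec,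
      Matrix.one_mulVec, ← Matrix.mulVec_mulVec, hinvVW] at h3j h4j ⊢
    have hd := hvw j
    field_simp
    linear_combination vi j * h3j - h4j
  -- pointwise claim for the previous-level inactive block
  have P3 : Δlam₀ + lam₀ = -(((Matrix.diagonal w₀)⁻¹ * Matrix.diagonal lam₀) *ᵥ
      (A₀ *ᵥ Δx)) + (lam₀ + (Matrix.diagonal w₀)⁻¹ *ᵥ
        (lam₀ * (b₀ - A₀ *ᵥ x) + s₀ • (1 : Fin m₀ → ℝ))) := by
    funext j
    have h6j := congrFun h6 j
    have h7j := congrFun h7 j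
    simp only [Pi.add_apply, Pi.neg_apply, Pi.sub_apply, Pi.mul_apply, Pi.smul_apply,
      Pi.one_apply, smul_eq_mul, mul_one, Matrix.mulVec_diagonal,
      ← Matrix.mulVec_mulVec, hinvW₀] at h6j h7j ⊢
    have hd := hw₀ j
    field_simp
    linear_combination h7j - lam₀ j * h6j
  have P1 : Δve + ve = Ae *ᵥ Δx - (be - Ae *ᵥ x) := by
    funext j
    have h2j := congrFun h2 j
    simp only [Pi.add_apply, Pi.neg_apply, Pi.sub_apply] at h2j ⊢
    linarith
  constructor
  · funext k
    have h1k := congrFun h1 k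
    have E1 := congrFun (congrArg (fun v => Aeᵀ *ᵥ v) P1) k
    have E2 := congrFun (congrArg (fun v => Aiᵀ *ᵥ v) P2) k
    have E3 := congrFun (congrArg (fun v => A₀ᵀ *ᵥ v) P3) k
    simp only [Matrix.mulVec_add, Matrix.mulVec_sub, Matrix.mulVec_neg,
      ← Matrix.mulVec_mulVec, Matrix.add_mulVec, Matrix.one_mulVec,
      Pi.add_apply, Pi.sub_apply, Pi.neg_apply] at h1k E1 E2 E3 ⊢
    linarith
  · funext j
    have h5j := congrFun h5 j
    simp only [Pi.neg_apply, Pi.add_apply, Pi.sub_apply] at h5j ⊢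
    linarith
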